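/- With r_j defined as in the paper (acting on φ_{j-1,·}, φ_{j,·}, φ_{j+1,·} via the polynomials P_{j,i} and fixing all other variables), one has r_j(β_i) = β_i for every i ∈ ℤ/mℤ, where β_i = Π_{k=0}^{mn-1} φ_{k,i}. -/

import Mathlib

/-- The transformation `r_j` fixes every parameter `β_i = Π_{k=0}^{mn-1} φ_{k,i}`:
the three correction factors introduced in column `i` cancel. -/
theorem stmt5 {K : Type*} [Field K] (m n : ℕ) (hm : 2 ≤ m) (hmn : 3 ≤ m * n)
    (φ : ZMod (m * n) → ZMod m → K) (hφ : ∀ k i, φ k i ≠ 0)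
    (j : ZMod (m * n))
    (P : ZMod (m * n) → ZMod m → K)
    (hP : ∀ k i, P k i = ∑ a ∈ Finset.range m, ∏ l ∈ Finset.range a, φ k (i + (l : ZMod m)))
    (hPne : ∀ i, P j i ≠ 0)
    (ψ : ZMod (m * n) → ZMod m → K)
    (hψ : ∀ k i, ψ k i =
      if k = j then (φ j (i + 1))⁻¹ * (P j i / P j (i + 2))
      else if k = j - 1 then φ (j - 1) i * φ j (i + 1) * (P j (i + 2) / P j (i + 1))
      else if k = j + 1 then φ j i * φ (j + 1) i * (P j (i + 1) / P j i)
      else φ k i)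
    (β : ZMod m → K)
    (hβ : ∀ i, β i = ∏ k ∈ Finset.range (m * n), φ ((k : ℕ) : ZMod (m * n)) i) :
    ∀ i, (∏ k ∈ Finset.range (m * n), ψ ((k : ℕ) : ZMod (m * n)) i) = β i := by
  intro i
  haveI : NeZero (m * n) := ⟨by omega⟩
  have hcast : ∀ f : ZMod (m * n) → K,
      ∏ k ∈ Finset.range (m * n), f ((k : ℕ) : ZMod (m * n)) = ∏ k : ZMod (m * n), f k := by
    intro f
    refine Finset.prod_nbij (fun k => ((k : ℕ) : ZMod (m * n))) (fun a _ => Finset.mem_univ _)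
      ?_ ?_ (fun _ _ => rfl)
    · intro a ha b hb hab
      simp only [Finset.mem_coe, Finset.mem_range] at ha hb
      have := (ZMod.natCast_eq_natCast_iff' a b (m * n)).mp hab
      rwa [Nat.mod_eq_of_lt ha, Nat.mod_eq_of_lt hb] at this
    · intro b _
      exact ⟨b.val, Finset.mem_coe.mpr (Finset.mem_range.mpr (ZMod.val_lt b)), by
        simp [ZMod.natCast_val, ZMod.cast_id]⟩
  rw [hβ, hcast (fun k => ψ k i), hcast (fun k => φ k i)]
  -- distinctness
  have h1 : (1 : ZMod (m * n)) ≠ 0 := by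
    intro h
    have : ((1 : ℕ) : ZMod (m * n)) = 0 := by exact_mod_cast h
    have := (ZMod.natCast_eq_zero_iff 1 (m * n)).mp this
    have := Nat.le_of_dvd one_pos this
    omega
  have h2 : (2 : ZMod (m * n)) ≠ 0 := by
    intro h
    have : ((2 : ℕ) : ZMod (m * n)) = 0 := by exact_mod_cast h
    have := (ZMod.natCast_eq_zero_iff 2 (m * n)).mp this
    have := Nat.le_of_dvd two_pos this
    omega
  have hne1 : j - 1 ≠ j := by
    intro h; apply h1; have := sub_eq_iff_eq_add.mp h; linear_combination -this
  have hne2 : j ≠ j + 1 := by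
    intro h; apply h1; linear_combination -h
  have hne3 : j - 1 ≠ j + 1 := by
    intro h; apply h2; linear_combination -h
  -- split off the three special indices
  set S : Finset (ZMod (m * n)) := {j - 1, j, j + 1} with hS
  have hsub : S ⊆ Finset.univ := Finset.subset_univ _
  have hrest : ∀ g : ZMod (m * n) → K,
      ∏ k : ZMod (m * n), g k = (∏ k ∈ S, g k) * ∏ k ∈ Finset.univ \ S, g k := by
    intro g
    rw [← Finset.prod_sdiff hsub, mul_comm]
  rw [hrest (fun k => ψ k i), hrest (fun k => φ k i)]
  have hrest_eq : ∏ k ∈ Finset.univ \ S, ψ k i = ∏ k ∈ Finset.univ \ S, φ k i := by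
    apply Finset.prod_congr rfl
    intro k hk
    simp only [Finset.mem_sdiff, hS, Finset.mem_insert, Finset.mem_singleton, not_or] at hk
    rw [hψ]
    simp [hk.2.1, hk.2.2.1, hk.2.2.2]
  rw [hrest_eq]
  congr 1
  have hprodS : ∀ g : ZMod (m * n) → K,
      ∏ k ∈ S, g k = g (j - 1) * g j * g (j + 1) := by
    intro g
    rw [hS, Finset.prod_insert (by simp [hne1, hne3]),
      Finset.prod_insert (by simp [hne2]), Finset.prod_singleton, mul_assoc]
  rw [hprodS, hprodS]
  rw [hψ, hψ, hψ]
  simp only [if_pos rfl, if_neg hne1, if_neg hne1.symm, if_neg hne2, if_neg hne2.symm,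
    if_neg hne3.symm, if_pos rfl, eq_self_iff_true, if_true]
  have hp0 := hPne i
  have hp1 := hPne (i + 1)
  have hp2 := hPne (i + 2)
  have hf1 := hφ j (i + 1)
  field_simp
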